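/- Let γ : ℝ → ℝ be continuously differentiable with γ' bounded, and let F : ℝ → ℝ be twice continuously differentiable with F(0) = 0 and with (F·F')' bounded. Then for every λ ∈ ℝ and every d > 0 there exists a unique function ψ : [0,d] → ℝ, continuously differentiable on [0,d] and twice continuously differentiable on (0,d], such that ψ(0) = λ, ψ'(0) = 0, and ψ''(r) + (3/r)·ψ'(r) = -γ(r²ψ(r)) - (F·F')(r²ψ(r))/r² for all r ∈ (0,d]. -/

import Mathlib

open Real Set

open MeasureTheory intervalIntegral Filter Topology

namespace S16

variable (γ h : ℝ → ℝ)

noncomputable def G (t y : ℝ) : ℝ := -(t ^ 3 * γ (t ^ 2 * y) + t * h (t ^ 2 * y))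

noncomputable def II (ψ : ℝ → ℝ) (s : ℝ) : ℝ := ∫ t in (0:ℝ)..s, G γ h t (ψ t)

noncomputable def P (ψ : ℝ → ℝ) (s : ℝ) : ℝ := (s ^ 3)⁻¹ * II γ h ψ s

noncomputable def T (lam : ℝ) (ψ : ℝ → ℝ) (r : ℝ) : ℝ := lam + ∫ s in (0:ℝ)..r, P γ h ψ s

variable {γ h}
variable {ψ χ : ℝ → ℝ} {d lam : ℝ} {Cγ Ch : NNReal}

lemma Glip (hγl : LipschitzWith Cγ γ) (hhl : LipschitzWith Ch h)
    {t : ℝ} (ht : t ∈ Icc (0:ℝ) d) (y z : ℝ) :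
    |G γ h t y - G γ h t z| ≤ ((Cγ:ℝ) * d^2 + (Ch:ℝ)) * (t^3 * |y - z|) := by
  obtain ⟨ht0, htd⟩ := ht
  have hsub : |t^2*y - t^2*z| = t^2 * |y - z| := by
    rw [← mul_sub, abs_mul, abs_of_nonneg (sq_nonneg t)]
  have h1 : |γ (t^2*y) - γ (t^2*z)| ≤ (Cγ:ℝ) * (t^2 * |y - z|) := by
    have := hγl.dist_le_mul (t^2*y) (t^2*z)
    rwa [Real.dist_eq, Real.dist_eq, hsub] at this
  have h2 : |h (t^2*y) - h (t^2*z)| ≤ (Ch:ℝ) * (t^2 * |y - z|) := by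
    have := hhl.dist_le_mul (t^2*y) (t^2*z)
    rwa [Real.dist_eq, Real.dist_eq, hsub] at this
  have hGd : G γ h t y - G γ h t z
      = -(t^3 * (γ (t^2*y) - γ (t^2*z)) + t * (h (t^2*y) - h (t^2*z))) := by
    unfold G; ring
  have key : |G γ h t y - G γ h t z|
      ≤ t^3 * |γ (t^2*y) - γ (t^2*z)| + t * |h (t^2*y) - h (t^2*z)| := by
    rw [hGd, abs_neg]
    refine (abs_add_le _ _).trans ?_
    rw [abs_mul, abs_mul, abs_of_nonneg (pow_nonneg ht0 3), abs_of_nonneg ht0]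
  refine key.trans ?_
  have ht3 : (0:ℝ) ≤ t^3 := pow_nonneg ht0 3
  calc t^3 * |γ (t^2*y) - γ (t^2*z)| + t * |h (t^2*y) - h (t^2*z)|
      ≤ t^3 * ((Cγ:ℝ) * (t^2 * |y - z|)) + t * ((Ch:ℝ) * (t^2 * |y - z|)) := by
        gcongr
    _ = ((Cγ:ℝ) * t^2 + (Ch:ℝ)) * (t^3 * |y - z|) := by ring
    _ ≤ ((Cγ:ℝ) * d^2 + (Ch:ℝ)) * (t^3 * |y - z|) := by
        gcongr

lemma Gbd (hγc : Continuous γ) (hhl : LipschitzWith Ch h) (hh0 : h 0 = 0)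
    (hψ : Continuous ψ) (hd : 0 ≤ d) :
    ∃ K : ℝ, 0 ≤ K ∧ ∀ t ∈ Icc (0:ℝ) d, |G γ h t (ψ t)| ≤ K * t^3 := by
  obtain ⟨A, hA⟩ := isCompact_Icc.exists_bound_of_continuousOn
    (f := fun t : ℝ => γ (t^2 * ψ t)) (by fun_prop)
  obtain ⟨M, hM⟩ := isCompact_Icc.exists_bound_of_continuousOn
    (f := ψ) (hψ.continuousOn (s := Icc (0:ℝ) d))
  refine ⟨max A 0 + (Ch:ℝ) * max M 0, by positivity, fun t ht => ?_⟩
  obtain ⟨ht0, htd⟩ := ht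
  have hγb : |γ (t^2 * ψ t)| ≤ max A 0 := le_trans (hA t ⟨ht0, htd⟩) (le_max_left _ _)
  have hhb : |h (t^2 * ψ t)| ≤ (Ch:ℝ) * (t^2 * max M 0) := by
    have h1 := hhl.dist_le_mul (t^2 * ψ t) 0
    rw [Real.dist_eq, Real.dist_eq, hh0, sub_zero, sub_zero] at h1
    refine h1.trans ?_
    rw [abs_mul, abs_of_nonneg (sq_nonneg t)]
    have : |ψ t| ≤ max M 0 := le_trans (hM t ⟨ht0, htd⟩) (le_max_left _ _)
    gcongr
  have key : |G γ h t (ψ t)| ≤ t^3 * |γ (t^2 * ψ t)| + t * |h (t^2 * ψ t)| := by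
    unfold G
    rw [abs_neg]
    refine (abs_add_le _ _).trans ?_
    rw [abs_mul, abs_mul, abs_of_nonneg (pow_nonneg ht0 3), abs_of_nonneg ht0]
  refine key.trans ?_
  calc t^3 * |γ (t^2 * ψ t)| + t * |h (t^2 * ψ t)|
      ≤ t^3 * max A 0 + t * ((Ch:ℝ) * (t^2 * max M 0)) := by
        gcongr
    _ = (max A 0 + (Ch:ℝ) * max M 0) * t^3 := by ring

lemma contG (hγ : Continuous γ) (hh : Continuous h) (hψ : Continuous ψ) :
    Continuous fun t => G γ h t (ψ t) := by
  unfold G; fun_prop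

lemma intG (hγ : Continuous γ) (hh : Continuous h) (hψ : Continuous ψ) (a b : ℝ) :
    IntervalIntegrable (fun t => G γ h t (ψ t)) volume a b :=
  (contG hγ hh hψ).intervalIntegrable a b

lemma contII (hγ : Continuous γ) (hh : Continuous h) (hψ : Continuous ψ) :
    Continuous (II γ h ψ) :=
  intervalIntegral.continuous_primitive (intG hγ hh hψ) 0

lemma hasDerivII (hγ : Continuous γ) (hh : Continuous h) (hψ : Continuous ψ) (r : ℝ) :
    HasDerivAt (II γ h ψ) (G γ h r (ψ r)) r :=
  intervalIntegral.integral_hasDerivAt_right (intG hγ hh hψ 0 r)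
    ((contG hγ hh hψ).stronglyMeasurableAtFilter _ _) (contG hγ hh hψ).continuousAt

lemma IIbd {K : ℝ} (hK : 0 ≤ K) (hγ : Continuous γ) (hh : Continuous h) (hψ : Continuous ψ)
    (hGb : ∀ t ∈ Icc (0:ℝ) d, |G γ h t (ψ t)| ≤ K * t^3) {s : ℝ} (hs : s ∈ Icc (0:ℝ) d) :
    |II γ h ψ s| ≤ K * (s^4 / 4) := by
  obtain ⟨hs0, hsd⟩ := hs
  have hae : ∀ᵐ t ∂(volume.restrict (Set.uIoc (0:ℝ) s)), ‖G γ h t (ψ t)‖ ≤ K * t^3 := by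
    rw [uIoc_of_le hs0]
    refine (ae_restrict_iff' measurableSet_Ioc).2 (ae_of_all _ fun t ht => ?_)
    rw [Real.norm_eq_abs]
    exact hGb t ⟨le_of_lt ht.1, ht.2.trans hsd⟩
  have hb : IntervalIntegrable (fun t : ℝ => K * t^3) volume 0 s :=
    (Continuous.intervalIntegrable (by fun_prop) 0 s)
  have := intervalIntegral.norm_integral_le_abs_of_norm_le hae hb
  rw [Real.norm_eq_abs] at this
  refine this.trans ?_
  have : ∫ t in (0:ℝ)..s, K * t^3 = K * (s^4 / 4) := by
    rw [intervalIntegral.integral_const_mul, integral_pow]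
    norm_num
  rw [this, abs_of_nonneg (by positivity)]

lemma Pbd {K : ℝ} (hK : 0 ≤ K) (hγ : Continuous γ) (hh : Continuous h) (hψ : Continuous ψ)
    (hGb : ∀ t ∈ Icc (0:ℝ) d, |G γ h t (ψ t)| ≤ K * t^3) {s : ℝ} (hs : s ∈ Icc (0:ℝ) d) :
    |P γ h ψ s| ≤ K / 4 * s := by
  rcases eq_or_lt_of_le hs.1 with h0 | h0
  · rw [← h0]; simp [P]
  · have hII := IIbd hK hγ hh hψ hGb hs
    have h3 : (0:ℝ) < s^3 := by positivity
    rw [P, abs_mul, abs_inv, abs_of_nonneg (le_of_lt h3)]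
    calc (s^3)⁻¹ * |II γ h ψ s| ≤ (s^3)⁻¹ * (K * (s^4/4)) := by gcongr
      _ = K / 4 * s := by field_simp

lemma contPAt (hγ : Continuous γ) (hh : Continuous h) (hψ : Continuous ψ)
    {x : ℝ} (hx : x ≠ 0) : ContinuousAt (P γ h ψ) x :=
  (((continuous_pow 3).continuousAt).inv₀ (pow_ne_zero 3 hx)).mul
    (contII hγ hh hψ).continuousAt

lemma contP (hd : 0 ≤ d) (hγ : Continuous γ) (hh : Continuous h)
    (hhl : LipschitzWith Ch h) (hh0 : h 0 = 0) (hψ : Continuous ψ) :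
    ContinuousOn (P γ h ψ) (Icc 0 d) := by
  obtain ⟨K, hK, hGb⟩ := Gbd hγ hhl hh0 hψ hd
  intro x hx
  rcases eq_or_lt_of_le hx.1 with h0 | h0
  · rw [← h0]
    have hP0 : P γ h ψ 0 = 0 := by simp [P]
    rw [ContinuousWithinAt, hP0]
    have hg : Tendsto (fun s : ℝ => K / 4 * s) (𝓝[Icc 0 d] 0) (𝓝 0) := by
      have : Tendsto (fun s : ℝ => K / 4 * s) (𝓝 0) (𝓝 (K / 4 * 0)) := (continuous_const.mul continuous_id).tendsto 0
      rw [mul_zero] at this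
      exact this.mono_left nhdsWithin_le_nhds
    refine squeeze_zero_norm' ?_ hg
    filter_upwards [self_mem_nhdsWithin] with s hs
    exact Pbd hK hγ hh hψ hGb hs
  · exact (contPAt hγ hh hψ (ne_of_gt h0)).continuousWithinAt

/-- Generic bound of a primitive by a power. -/
lemma intbd {f : ℝ → ℝ} {c : ℝ} (hc : 0 ≤ c) {m : ℕ} {s : ℝ} (hs : 0 ≤ s)
    (hf : IntervalIntegrable f volume 0 s)
    (hb : ∀ t ∈ Ioc (0:ℝ) s, |f t| ≤ c * t ^ m) :
    |∫ t in (0:ℝ)..s, f t| ≤ c * (s^(m+1) / ((m:ℝ)+1)) := by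
  have hae : ∀ᵐ t ∂(volume.restrict (Set.uIoc (0:ℝ) s)), ‖f t‖ ≤ c * t^m := by
    rw [uIoc_of_le hs]
    exact (ae_restrict_iff' measurableSet_Ioc).2 (ae_of_all _ fun t ht => by
      rw [Real.norm_eq_abs]; exact hb t ht)
  have hbi : IntervalIntegrable (fun t : ℝ => c * t^m) volume 0 s :=
    Continuous.intervalIntegrable (by fun_prop) 0 s
  have h2 := intervalIntegral.norm_integral_le_abs_of_norm_le hae hbi
  rw [Real.norm_eq_abs] at h2
  refine h2.trans ?_
  rw [intervalIntegral.integral_const_mul, integral_pow]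
  have hz : (0:ℝ) ^ (m+1) = 0 := zero_pow (Nat.succ_ne_zero m)
  rw [hz, sub_zero, abs_of_nonneg (by positivity)]

lemma intP (hd : 0 ≤ d) (hγ : Continuous γ) (hh : Continuous h)
    (hhl : LipschitzWith Ch h) (hh0 : h 0 = 0) (hψ : Continuous ψ)
    {r : ℝ} (hr : r ∈ Icc (0:ℝ) d) :
    IntervalIntegrable (P γ h ψ) volume 0 r := by
  refine ContinuousOn.intervalIntegrable ?_
  rw [uIcc_of_le hr.1]
  exact (contP hd hγ hh hhl hh0 hψ).mono (Icc_subset_Icc_right hr.2)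

lemma hasDerivT_pos (hd : 0 ≤ d) (hγ : Continuous γ) (hh : Continuous h)
    (hhl : LipschitzWith Ch h) (hh0 : h 0 = 0) (hψ : Continuous ψ)
    {r : ℝ} (hr : r ∈ Ioc (0:ℝ) d) :
    HasDerivAt (T γ h lam ψ) (P γ h ψ r) r := by
  have hmeas : StronglyMeasurableAtFilter (P γ h ψ) (𝓝 r) volume := by
    refine ContinuousAt.stronglyMeasurableAtFilter (s := {x : ℝ | x ≠ 0})
      isOpen_compl_singleton ?_ r hr.1.ne'
    exact fun x hx => contPAt hγ hh hψ hx
  have h1 : HasDerivAt (fun u => ∫ s in (0:ℝ)..u, P γ h ψ s) (P γ h ψ r) r :=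
    intervalIntegral.integral_hasDerivAt_right
      (intP hd hγ hh hhl hh0 hψ ⟨hr.1.le, hr.2⟩) hmeas (contPAt hγ hh hψ hr.1.ne')
  exact h1.const_add lam

lemma hasDerivT_zero (hd : 0 < d) (hγ : Continuous γ) (hh : Continuous h)
    (hhl : LipschitzWith Ch h) (hh0 : h 0 = 0) (hψ : Continuous ψ) :
    HasDerivWithinAt (T γ h lam ψ) 0 (Icc 0 d) 0 := by
  obtain ⟨K, hK, hGb⟩ := Gbd hγ hhl hh0 hψ hd.le
  rw [hasDerivWithinAt_iff_tendsto_slope]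
  have hg : Tendsto (fun u : ℝ => K / 8 * u) (𝓝[Icc 0 d \ {0}] 0) (𝓝 0) := by
    have h1 : Tendsto (fun u : ℝ => K / 8 * u) (𝓝 0) (𝓝 (K / 8 * 0)) :=
      (continuous_const.mul continuous_id).tendsto 0
    rw [mul_zero] at h1
    exact h1.mono_left nhdsWithin_le_nhds
  refine squeeze_zero_norm' ?_ hg
  filter_upwards [self_mem_nhdsWithin] with u hu
  obtain ⟨⟨hu0, hud⟩, hune⟩ := hu
  have hupos : 0 < u := lt_of_le_of_ne hu0 (Ne.symm hune)
  have hprim : |∫ s in (0:ℝ)..u, P γ h ψ s| ≤ K / 4 * (u^2 / 2) := by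
    have hbnd : ∀ t ∈ Ioc (0:ℝ) u, |P γ h ψ t| ≤ K / 4 * t ^ 1 := fun t ht => by
      simpa using Pbd hK hγ hh hψ hGb ⟨ht.1.le, ht.2.trans hud⟩
    have h0 := intbd (c := K / 4) (m := 1) (by positivity) hu0
      (intP hd.le hγ hh hhl hh0 hψ ⟨hu0, hud⟩) hbnd
    norm_num at h0
    linarith
  have hslope : slope (T γ h lam ψ) 0 u = (∫ s in (0:ℝ)..u, P γ h ψ s) / u := by
    rw [slope_def_field, T, T]
    simp
  rw [hslope, Real.norm_eq_abs, abs_div, abs_of_pos hupos]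
  rw [div_le_iff₀ hupos]
  calc |∫ s in (0:ℝ)..u, P γ h ψ s| ≤ K / 4 * (u^2/2) := hprim
    _ = K / 8 * u * u := by ring

lemma hasDerivT (hd : 0 < d) (hγ : Continuous γ) (hh : Continuous h)
    (hhl : LipschitzWith Ch h) (hh0 : h 0 = 0) (hψ : Continuous ψ) :
    ∀ r ∈ Icc (0:ℝ) d, HasDerivWithinAt (T γ h lam ψ) (P γ h ψ r) (Icc 0 d) r := by
  intro r hr
  rcases eq_or_lt_of_le hr.1 with h0 | h0
  · rw [← h0]
    have : P γ h ψ 0 = 0 := by simp [P]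
    rw [this]
    exact hasDerivT_zero hd hγ hh hhl hh0 hψ
  · exact (hasDerivT_pos hd.le hγ hh hhl hh0 hψ ⟨h0, hr.2⟩).hasDerivWithinAt

lemma contT (hd : 0 < d) (hγ : Continuous γ) (hh : Continuous h)
    (hhl : LipschitzWith Ch h) (hh0 : h 0 = 0) (hψ : Continuous ψ) :
    ContinuousOn (T γ h lam ψ) (Icc 0 d) :=
  fun r hr => (hasDerivT hd hγ hh hhl hh0 hψ r hr).continuousWithinAt

lemma hasDerivP_pos (hγ : Continuous γ) (hh : Continuous h) (hψ : Continuous ψ)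
    {r : ℝ} (hr : r ≠ 0) :
    HasDerivAt (P γ h ψ)
      (-(3*r^2) / (r^3)^2 * II γ h ψ r + (r^3)⁻¹ * G γ h r (ψ r)) r := by
  have hp : HasDerivAt (fun s : ℝ => s^3) (3*r^2) r := by
    simpa using hasDerivAt_pow 3 r
  have h1 : HasDerivAt (fun s : ℝ => (s^3)⁻¹) (-(3*r^2) / (r^3)^2) r :=
    hp.inv (pow_ne_zero 3 hr)
  exact h1.mul (hasDerivII hγ hh hψ r)

lemma P_congr (he : EqOn ψ χ (Icc 0 d)) {s : ℝ} (hs : s ∈ Icc (0:ℝ) d) :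
    P γ h ψ s = P γ h χ s := by
  unfold P II
  congr 1
  refine intervalIntegral.integral_congr fun t ht => ?_
  rw [uIcc_of_le hs.1] at ht
  rw [he (mem_of_mem_of_subset ht (Icc_subset_Icc_right hs.2))]

lemma T_congr (he : EqOn ψ χ (Icc 0 d)) {r : ℝ} (hr : r ∈ Icc (0:ℝ) d) :
    T γ h lam ψ r = T γ h lam χ r := by
  unfold T
  congr 1
  refine intervalIntegral.integral_congr fun s hs => ?_
  rw [uIcc_of_le hr.1] at hs
  exact P_congr he (mem_of_mem_of_subset hs (Icc_subset_Icc_right hr.2))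

lemma Tcontract (hd : 0 < d) (hγ : Continuous γ) (hγl : LipschitzWith Cγ γ)
    (hh : Continuous h) (hhl : LipschitzWith Ch h) (hh0 : h 0 = 0)
    (hψ : Continuous ψ) (hχ : Continuous χ)
    {B : ℝ} (hB : 0 ≤ B) {k : ℕ}
    (hbd : ∀ t ∈ Icc (0:ℝ) d, |ψ t - χ t| ≤ B * t ^ k) :
    ∀ r ∈ Icc (0:ℝ) d, |T γ h lam ψ r - T γ h lam χ r|
      ≤ ((Cγ:ℝ)*d^2+(Ch:ℝ)) * B / (((k:ℝ)+4) * ((k:ℝ)+2)) * r^(k+2) := by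
  set L : ℝ := (Cγ:ℝ)*d^2+(Ch:ℝ) with hLdef
  have hL0 : 0 ≤ L := by positivity
  have hIdiff : ∀ s ∈ Icc (0:ℝ) d,
      |II γ h ψ s - II γ h χ s| ≤ L * B * (s^(k+4) / ((k:ℝ)+4)) := by
    intro s hs
    rw [II, II, ← intervalIntegral.integral_sub (intG hγ hh hψ 0 s) (intG hγ hh hχ 0 s)]
    have h1 := intbd (c := L * B) (m := k + 3) (by positivity) hs.1
      ((intG hγ hh hψ 0 s).sub (intG hγ hh hχ 0 s)) (fun t ht => ?_)
    · have hc : ((k:ℝ)+3) + 1 = (k:ℝ)+4 := by ring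
      have hcast : ((k+3 : ℕ):ℝ) + 1 = (k:ℝ) + 4 := by push_cast; ring
      rw [hcast] at h1
      have hkk : k + 3 + 1 = k + 4 := by omega
      rw [hkk] at h1
      exact h1
    · have htm : t ∈ Icc (0:ℝ) d := ⟨ht.1.le, ht.2.trans hs.2⟩
      have h2 := Glip (d := d) hγl hhl htm (ψ t) (χ t)
      refine h2.trans ?_
      calc L * (t^3 * |ψ t - χ t|) ≤ L * (t^3 * (B * t^k)) :=
            mul_le_mul_of_nonneg_left
              (mul_le_mul_of_nonneg_left (hbd t htm) (pow_nonneg htm.1 3)) hL0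
        _ = L * B * t^(k+3) := by rw [pow_add]; ring
  have hPdiff : ∀ s ∈ Icc (0:ℝ) d,
      |P γ h ψ s - P γ h χ s| ≤ L * B / ((k:ℝ)+4) * s^(k+1) := by
    intro s hs
    rcases eq_or_lt_of_le hs.1 with h0 | h0
    · rw [← h0]; simp [P]
    · have h3 : (0:ℝ) < s^3 := by positivity
      have : P γ h ψ s - P γ h χ s = (s^3)⁻¹ * (II γ h ψ s - II γ h χ s) := by
        rw [P, P]; ring
      rw [this, abs_mul, abs_inv, abs_of_pos h3]
      calc (s^3)⁻¹ * |II γ h ψ s - II γ h χ s|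
          ≤ (s^3)⁻¹ * (L * B * (s^(k+4) / ((k:ℝ)+4))) := by gcongr; exact hIdiff s hs
        _ = L * B / ((k:ℝ)+4) * s^(k+1) := by
            have hk4 : ((k:ℝ)+4) ≠ 0 := by positivity
            have hsp : s^(k+4) = s^(k+1) * s^3 := by rw [← pow_add]
            rw [hsp]
            field_simp
  intro r hr
  have hTd : T γ h lam ψ r - T γ h lam χ r
      = ∫ s in (0:ℝ)..r, (P γ h ψ s - P γ h χ s) := by
    rw [T, T, add_sub_add_left_eq_sub,
      ← intervalIntegral.integral_sub (intP hd.le hγ hh hhl hh0 hψ hr)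
      (intP hd.le hγ hh hhl hh0 hχ hr)]
  rw [hTd]
  have h1 := intbd (c := L * B / ((k:ℝ)+4)) (m := k + 1) (by positivity) hr.1
    ((intP hd.le hγ hh hhl hh0 hψ hr).sub (intP hd.le hγ hh hhl hh0 hχ hr))
    (fun s hs => hPdiff s ⟨hs.1.le, hs.2.trans hr.2⟩)
  have hcast : ((k+1 : ℕ):ℝ) + 1 = (k:ℝ) + 2 := by push_cast; ring
  rw [hcast] at h1
  refine h1.trans (le_of_eq ?_)
  have hk4 : ((k:ℝ)+4) ≠ 0 := by positivity
  have hk2 : ((k:ℝ)+2) ≠ 0 := by positivity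
  have : k + 1 + 1 = k + 2 := by omega
  rw [this]
  field_simp

noncomputable def cc : ℕ → ℝ
  | 0 => 1
  | (n+1) => cc n * ((2*(n:ℝ)+2)*(2*(n:ℝ)+4))

lemma cc_pos : ∀ n, 0 < cc n
  | 0 => one_pos
  | (n+1) => by
      rw [cc]
      have := cc_pos n
      positivity

lemma cc_ge (n : ℕ) : (4:ℝ)^n * (n.factorial : ℝ) ≤ cc n := by
  induction n with
  | zero => simp [cc]
  | succ n ih =>
      rw [cc]
      have h1 : (4:ℝ)^(n+1) * ((n+1).factorial : ℝ) = (4^n * (n.factorial : ℝ)) * (4*((n:ℝ)+1)) := by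
        rw [Nat.factorial_succ]
        push_cast
        ring
      rw [h1]
      have h2 : (0:ℝ) < 4*((n:ℝ)+1) := by positivity
      have h3 : (4:ℝ)*((n:ℝ)+1) ≤ (2*(n:ℝ)+2)*(2*(n:ℝ)+4) := by nlinarith [sq_nonneg ((n:ℝ)+1)]
      calc (4:ℝ)^n * (n.factorial : ℝ) * (4*((n:ℝ)+1)) ≤ cc n * (4*((n:ℝ)+1)) := by
            have := cc_pos n
            gcongr
        _ ≤ cc n * ((2*(n:ℝ)+2)*(2*(n:ℝ)+4)) := by
            have := cc_pos n
            gcongr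

section FP

variable (γ h lam)
variable (hd : 0 < d) (hγ : Continuous γ) (hγl : LipschitzWith Cγ γ)
  (hh : Continuous h) (hhl : LipschitzWith Ch h) (hh0 : h 0 = 0)

noncomputable def extf (f : C(Icc (0:ℝ) d, ℝ)) : ℝ → ℝ :=
  fun r => f (projIcc 0 d hd.le r)

lemma extf_cont (f : C(Icc (0:ℝ) d, ℝ)) : Continuous (extf hd f) :=
  f.continuous.comp continuous_projIcc

lemma extf_eq (f : C(Icc (0:ℝ) d, ℝ)) {r : ℝ} (hr : r ∈ Icc (0:ℝ) d) :
    extf hd f r = f ⟨r, hr⟩ := by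
  rw [extf, projIcc_of_mem]

noncomputable def TT (f : C(Icc (0:ℝ) d, ℝ)) : C(Icc (0:ℝ) d, ℝ) :=
  ⟨(Icc (0:ℝ) d).restrict (T γ h lam (extf hd f)),
   ContinuousOn.restrict (contT hd hγ hh hhl hh0 (extf_cont hd f))⟩

lemma TT_apply (f : C(Icc (0:ℝ) d, ℝ)) (x : Icc (0:ℝ) d) :
    TT γ h lam hd hγ hh hhl hh0 f x = T γ h lam (extf hd f) (x:ℝ) := rfl

include hγl in
lemma iter_bound (f g : C(Icc (0:ℝ) d, ℝ)) :
    ∀ (n : ℕ) (x : Icc (0:ℝ) d),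
      |(TT γ h lam hd hγ hh hhl hh0)^[n] f x - (TT γ h lam hd hγ hh hhl hh0)^[n] g x|
        ≤ dist f g * (((Cγ:ℝ)*d^2+(Ch:ℝ))^n * ((x:ℝ))^(2*n) / cc n) := by
  intro n
  induction n with
  | zero =>
      intro x
      simpa [cc, Real.dist_eq] using ContinuousMap.dist_apply_le_dist (f := f) (g := g) x
  | succ n ih =>
      intro x
      set L : ℝ := (Cγ:ℝ)*d^2+(Ch:ℝ) with hL
      have hL0 : (0:ℝ) ≤ L := by positivity
      set F1 := (TT γ h lam hd hγ hh hhl hh0)^[n] f with hF1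
      set G1 := (TT γ h lam hd hγ hh hhl hh0)^[n] g with hG1
      have hB0 : (0:ℝ) ≤ dist f g * L^n / cc n := by
        have := cc_pos n
        positivity
      have hbd : ∀ t ∈ Icc (0:ℝ) d,
          |extf hd F1 t - extf hd G1 t| ≤ (dist f g * L^n / cc n) * t ^ (2*n) := by
        intro t ht
        rw [extf_eq hd F1 ht, extf_eq hd G1 ht]
        have := ih ⟨t, ht⟩
        calc |F1 ⟨t, ht⟩ - G1 ⟨t, ht⟩| ≤ dist f g * (L^n * t^(2*n) / cc n) := this
          _ = (dist f g * L^n / cc n) * t ^ (2*n) := by ring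
      have hstep := Tcontract (lam := lam) hd hγ hγl hh hhl hh0
        (extf_cont hd F1) (extf_cont hd G1) hB0 hbd (x:ℝ) x.2
      rw [Function.iterate_succ_apply', Function.iterate_succ_apply', ← hF1, ← hG1,
        TT_apply, TT_apply]
      refine hstep.trans (le_of_eq ?_)
      have hccn := cc_pos n
      have hcc : cc (n+1) = cc n * ((2*(n:ℝ)+2)*(2*(n:ℝ)+4)) := rfl
      have hkcast : ((2*n : ℕ):ℝ) = 2*(n:ℝ) := by push_cast; ring
      have hexp : 2*n+2 = 2*(n+1) := by omega
      rw [hkcast, hexp, hcc]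
      have h2 : (2*(n:ℝ)+4) ≠ 0 := by positivity
      have h3 : (2*(n:ℝ)+2) ≠ 0 := by positivity
      field_simp
      ring

include hγl in
lemma dist_iter_le (f g : C(Icc (0:ℝ) d, ℝ)) (n : ℕ) :
    dist ((TT γ h lam hd hγ hh hhl hh0)^[n] f) ((TT γ h lam hd hγ hh hhl hh0)^[n] g)
      ≤ (((Cγ:ℝ)*d^2+(Ch:ℝ))^n * d^(2*n) / cc n) * dist f g := by
  have hccn := cc_pos n
  have hL0 : (0:ℝ) ≤ (Cγ:ℝ)*d^2+(Ch:ℝ) := by positivity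
  have hC0 : (0:ℝ) ≤ (((Cγ:ℝ)*d^2+(Ch:ℝ))^n * d^(2*n) / cc n) * dist f g := by
    have := dist_nonneg (x := f) (y := g)
    have hdp : (0:ℝ) ≤ d^(2*n) := pow_nonneg hd.le _
    positivity
  refine (ContinuousMap.dist_le hC0).2 fun x => ?_
  rw [Real.dist_eq]
  refine (iter_bound γ h lam hd hγ hγl hh hhl hh0 f g n x).trans ?_
  have hx1 : ((x:ℝ))^(2*n) ≤ d^(2*n) := pow_le_pow_left₀ x.2.1 x.2.2 _
  calc dist f g * (((Cγ:ℝ)*d^2+(Ch:ℝ))^n * ((x:ℝ))^(2*n) / cc n)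
      ≤ dist f g * (((Cγ:ℝ)*d^2+(Ch:ℝ))^n * d^(2*n) / cc n) := by gcongr
    _ = (((Cγ:ℝ)*d^2+(Ch:ℝ))^n * d^(2*n) / cc n) * dist f g := by ring

include hγl in
lemma exists_contracting_iterate :
    ∃ n : ℕ, ContractingWith (1/2 : NNReal) ((TT γ h lam hd hγ hh hhl hh0)^[n]) := by
  set L : ℝ := (Cγ:ℝ)*d^2+(Ch:ℝ) with hL
  have hL0 : (0:ℝ) ≤ L := by positivity
  have htend := (Real.summable_pow_div_factorial (L*d^2/4)).tendsto_atTop_zero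
  obtain ⟨n, hn⟩ := (htend.eventually_lt_const (by norm_num : (0:ℝ) < 1/2)).exists
  refine ⟨n, ?_, LipschitzWith.of_dist_le_mul fun f g => ?_⟩
  · rw [← NNReal.coe_lt_coe]
    norm_num
  have h1 := dist_iter_le γ h lam hd hγ hγl hh hhl hh0 f g n
  refine h1.trans ?_
  have hq : L^n * d^(2*n) / cc n ≤ (L*d^2/4)^n / n.factorial := by
    have h2 : (L*d^2/4)^n / (n.factorial : ℝ) = L^n * d^(2*n) / (4^n * n.factorial) := by
      rw [div_pow, mul_pow]
      have hdd : ((d:ℝ)^2)^n = d^(2*n) := by rw [← pow_mul]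
      rw [hdd]
      field_simp
    rw [h2]
    have h4 : (0:ℝ) ≤ L^n * d^(2*n) := by
      have : (0:ℝ) ≤ d^(2*n) := pow_nonneg hd.le _
      positivity
    have h5 := cc_ge n
    have h3 : (0:ℝ) < 4^n * (n.factorial : ℝ) := by positivity
    gcongr
  have hfinal : L^n * d^(2*n) / cc n ≤ 1/2 := hq.trans hn.le
  have hdn := dist_nonneg (x := f) (y := g)
  calc L^n * d^(2*n) / cc n * dist f g ≤ 1/2 * dist f g :=
        mul_le_mul_of_nonneg_right hfinal hdn
    _ = ((1/2 : NNReal) : ℝ) * dist f g := by norm_num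

end FP

lemma sol_props (hd : 0 < d) (hγ : Continuous γ) (hh : Continuous h)
    (hhl : LipschitzWith Ch h) (hh0 : h 0 = 0) (hψ : Continuous ψ)
    (hfix : ∀ r ∈ Icc (0:ℝ) d, T γ h lam ψ r = ψ r) :
    ContDiffOn ℝ 1 ψ (Icc 0 d) ∧ ContDiffOn ℝ 2 ψ (Ioc 0 d) ∧
      ψ 0 = lam ∧ derivWithin ψ (Icc 0 d) 0 = 0 ∧
      ∀ r ∈ Ioc (0:ℝ) d,
        derivWithin (derivWithin ψ (Icc 0 d)) (Icc 0 d) r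
            + (3 / r) * derivWithin ψ (Icc 0 d) r
          = -γ (r^2 * ψ r) - h (r^2 * ψ r) / r^2 := by
  have hTEq : EqOn (T γ h lam ψ) ψ (Icc 0 d) := fun r hr => hfix r hr
  -- ψ has derivative P within Icc
  have hDW : ∀ r ∈ Icc (0:ℝ) d, HasDerivWithinAt ψ (P γ h ψ r) (Icc 0 d) r := by
    intro r hr
    exact (hasDerivT hd hγ hh hhl hh0 hψ r hr).congr
      (fun y hy => (hTEq hy).symm) (hTEq hr).symm
  have hudIcc := uniqueDiffOn_Icc hd
  have hdw_eq : EqOn (derivWithin ψ (Icc 0 d)) (P γ h ψ) (Icc 0 d) := fun r hr =>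
    (hDW r hr).derivWithin (hudIcc r hr)
  have hPcont : ContinuousOn (P γ h ψ) (Icc 0 d) := contP hd.le hγ hh hhl hh0 hψ
  -- C¹ on Icc
  have hC1 : ContDiffOn ℝ 1 ψ (Icc 0 d) := by
    have : ContDiffOn ℝ (0+1) ψ (Icc 0 d) := by
      refine (contDiffOn_succ_iff_derivWithin hudIcc).2 ⟨?_, ?_, ?_⟩
      · exact fun r hr => ((hDW r hr).differentiableWithinAt)
      · simp
      · exact contDiffOn_zero.2 (hPcont.congr hdw_eq)
    simpa using this
  -- C² on Ioc
  have hudIoc := uniqueDiffOn_Ioc 0 d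
  have hDA : ∀ r ∈ Ioc (0:ℝ) d, HasDerivAt (T γ h lam ψ) (P γ h ψ r) r :=
    fun r hr => hasDerivT_pos hd.le hγ hh hhl hh0 hψ hr
  have hDWioc : ∀ r ∈ Ioc (0:ℝ) d, HasDerivWithinAt ψ (P γ h ψ r) (Ioc 0 d) r := by
    intro r hr
    exact ((hDA r hr).hasDerivWithinAt).congr
      (fun y hy => (hTEq (Ioc_subset_Icc_self hy)).symm)
      (hTEq (Ioc_subset_Icc_self hr)).symm
  have hdw_eq2 : EqOn (derivWithin ψ (Ioc 0 d)) (P γ h ψ) (Ioc 0 d) := fun r hr =>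
    (hDWioc r hr).derivWithin (hudIoc r hr)
  have hPd : ∀ r ∈ Ioc (0:ℝ) d, HasDerivAt (P γ h ψ)
      (-(3*r^2) / (r^3)^2 * II γ h ψ r + (r^3)⁻¹ * G γ h r (ψ r)) r :=
    fun r hr => hasDerivP_pos hγ hh hψ hr.1.ne'
  have hC2 : ContDiffOn ℝ 2 ψ (Ioc 0 d) := by
    have : ContDiffOn ℝ (1+1) ψ (Ioc 0 d) := by
      refine (contDiffOn_succ_iff_derivWithin hudIoc).2 ⟨?_, ?_, ?_⟩
      · exact fun r hr => (hDWioc r hr).differentiableWithinAt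
      · simp
      · refine ContDiffOn.congr ?_ hdw_eq2
        have : ContDiffOn ℝ (0+1) (P γ h ψ) (Ioc 0 d) := by
          refine (contDiffOn_succ_iff_derivWithin hudIoc).2 ⟨?_, ?_, ?_⟩
          · exact fun r hr => (hPd r hr).differentiableAt.differentiableWithinAt
          · simp
          · rw [contDiffOn_zero]
            have heq3 : EqOn (derivWithin (P γ h ψ) (Ioc 0 d))
                (fun r => -(3*r^2) / (r^3)^2 * II γ h ψ r + (r^3)⁻¹ * G γ h r (ψ r))
                (Ioc 0 d) := fun r hr =>
              ((hPd r hr).hasDerivWithinAt).derivWithin (hudIoc r hr)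
            refine ContinuousOn.congr ?_ heq3
            have hne : ∀ r ∈ Ioc (0:ℝ) d, ((r:ℝ)^3)^2 ≠ 0 :=
              fun r hr => pow_ne_zero _ (pow_ne_zero _ hr.1.ne')
            have hne2 : ∀ r ∈ Ioc (0:ℝ) d, (r:ℝ)^3 ≠ 0 :=
              fun r hr => pow_ne_zero _ hr.1.ne'
            refine ContinuousOn.add ?_ ?_
            · exact ((continuousOn_const.mul (continuous_pow 2).continuousOn).neg.div
                ((continuous_pow 3).pow 2).continuousOn hne).mul
                (contII hγ hh hψ).continuousOn
            · exact (ContinuousOn.inv₀ (continuous_pow 3).continuousOn hne2).mul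
                (contG hγ hh hψ).continuousOn
        simpa using this
    simpa [one_add_one_eq_two] using this
  have h0mem : (0:ℝ) ∈ Icc (0:ℝ) d := ⟨le_rfl, hd.le⟩
  have hψ0 : ψ 0 = lam := by
    rw [← hfix 0 h0mem, T]
    simp
  have hP0 : P γ h ψ 0 = 0 := by simp [P]
  refine ⟨hC1, hC2, hψ0, by rw [hdw_eq h0mem, hP0], ?_⟩
  intro r hr
  have hrIcc : r ∈ Icc (0:ℝ) d := Ioc_subset_Icc_self hr
  have hr0 : r ≠ 0 := hr.1.ne'
  have houter : derivWithin (derivWithin ψ (Icc 0 d)) (Icc 0 d) r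
      = -(3*r^2) / (r^3)^2 * II γ h ψ r + (r^3)⁻¹ * G γ h r (ψ r) := by
    rw [derivWithin_congr hdw_eq (hdw_eq hrIcc)]
    exact ((hPd r hr).hasDerivWithinAt).derivWithin (hudIcc r hrIcc)
  rw [houter, hdw_eq hrIcc, P, G]
  have h3 : (r:ℝ)^3 ≠ 0 := pow_ne_zero _ hr0
  field_simp
  ring

lemma fixed_of_solution (hd : 0 < d) (hγ : Continuous γ) (hh : Continuous h)
    {ψ₂ : ℝ → ℝ}
    (hc1 : ContDiffOn ℝ 1 ψ₂ (Icc 0 d)) (hc2 : ContDiffOn ℝ 2 ψ₂ (Ioc 0 d))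
    (h0 : ψ₂ 0 = lam) (hp0 : derivWithin ψ₂ (Icc 0 d) 0 = 0)
    (hode : ∀ r ∈ Ioc (0:ℝ) d,
      derivWithin (derivWithin ψ₂ (Icc 0 d)) (Icc 0 d) r
          + (3 / r) * derivWithin ψ₂ (Icc 0 d) r
        = -γ (r^2 * ψ₂ r) - h (r^2 * ψ₂ r) / r^2) :
    ∀ r ∈ Icc (0:ℝ) d, T γ h lam ψ₂ r = ψ₂ r := by
  have hudIcc := uniqueDiffOn_Icc hd
  have hudIoc := uniqueDiffOn_Ioc 0 d
  set p := derivWithin ψ₂ (Icc 0 d) with hp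
  have hψc : ContinuousOn ψ₂ (Icc 0 d) := hc1.continuousOn
  have hpc : ContinuousOn p (Icc 0 d) := hc1.continuousOn_derivWithin hudIcc le_rfl
  have hdiffψ : ∀ r ∈ Icc (0:ℝ) d, HasDerivWithinAt ψ₂ (p r) (Icc 0 d) r :=
    fun r hr => ((hc1.differentiableOn one_ne_zero) r hr).hasDerivWithinAt
  have hGcont : ContinuousOn (fun t => G γ h t (ψ₂ t)) (Icc 0 d) := by
    unfold G
    fun_prop
  -- derivative of `p` at interior points
  have hq : ∀ r ∈ Ioo (0:ℝ) d, HasDerivAt p (derivWithin p (Icc 0 d) r) r := by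
    intro r hr
    have hIccN : Icc (0:ℝ) d ∈ 𝓝 r :=
      Filter.mem_of_superset (isOpen_Ioo.mem_nhds hr) Ioo_subset_Icc_self
    have hIocN : Ioc (0:ℝ) d ∈ 𝓝 r :=
      Filter.mem_of_superset (isOpen_Ioo.mem_nhds hr) Ioo_subset_Ioc_self
    have h2 : ContDiffOn ℝ 1 (derivWithin ψ₂ (Ioc 0 d)) (Ioc 0 d) := by
      have h21 : ContDiffOn ℝ (1+1) ψ₂ (Ioc 0 d) := by simpa [one_add_one_eq_two] using hc2
      exact ((contDiffOn_succ_iff_derivWithin hudIoc).1 h21).2.2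
    have hdiff2 : DifferentiableWithinAt ℝ (derivWithin ψ₂ (Ioc 0 d)) (Ioc 0 d) r :=
      (h2.differentiableOn one_ne_zero) r (Ioo_subset_Ioc_self hr)
    have hdiffAt : DifferentiableAt ℝ (derivWithin ψ₂ (Ioc 0 d)) r :=
      hdiff2.differentiableAt hIocN
    have hev : p =ᶠ[𝓝 r] derivWithin ψ₂ (Ioc 0 d) := by
      filter_upwards [isOpen_Ioo.mem_nhds hr] with x hx
      have hIccNx : Icc (0:ℝ) d ∈ 𝓝 x :=
        Filter.mem_of_superset (isOpen_Ioo.mem_nhds hx) Ioo_subset_Icc_self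
      have hIocNx : Ioc (0:ℝ) d ∈ 𝓝 x :=
        Filter.mem_of_superset (isOpen_Ioo.mem_nhds hx) Ioo_subset_Ioc_self
      rw [hp, derivWithin_of_mem_nhds hIccNx, derivWithin_of_mem_nhds hIocNx]
    have hpAt : DifferentiableAt ℝ p r := (hev.differentiableAt_iff).2 hdiffAt
    have h3 := hpAt.hasDerivAt
    rwa [derivWithin_of_mem_nhds hIccN]
  -- derivative of `r ↦ r³ p r`
  have hm : ∀ r ∈ Ioo (0:ℝ) d, HasDerivAt (fun u => u^3 * p u) (G γ h r (ψ₂ r)) r := by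
    intro r hr
    have h1 : HasDerivAt (fun u : ℝ => u^3) (3*r^2) r := by
      simpa using hasDerivAt_pow 3 r
    have h2 := h1.mul (hq r hr)
    have hode' := hode r (Ioo_subset_Ioc_self hr)
    have hr0 : r ≠ 0 := ne_of_gt hr.1
    have hkey : 3*r^2 * p r + r^3 * derivWithin p (Icc 0 d) r = G γ h r (ψ₂ r) := by
      have hqq : derivWithin p (Icc 0 d) r
          = -γ (r^2 * ψ₂ r) - h (r^2 * ψ₂ r) / r^2 - (3 / r) * p r := by
        rw [hp]
        linarith [hode']
      rw [hqq, G]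
      field_simp
      ring
    rw [← hkey]
    exact h2
  -- FTC : the inner integral
  have hm_int : ∀ s ∈ Icc (0:ℝ) d, (∫ t in (0:ℝ)..s, G γ h t (ψ₂ t)) = s^3 * p s := by
    intro s hs
    have hsub : Icc (0:ℝ) s ⊆ Icc (0:ℝ) d := Icc_subset_Icc_right hs.2
    have hcont : ContinuousOn (fun u => u^3 * p u) (Icc 0 s) :=
      (continuous_pow 3).continuousOn.mul (hpc.mono hsub)
    have hder : ∀ x ∈ Ioo (0:ℝ) s, HasDerivWithinAt (fun u => u^3 * p u)
        (G γ h x (ψ₂ x)) (Ioi x) x := fun x hx =>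
      (hm x ⟨hx.1, hx.2.trans_le hs.2⟩).hasDerivWithinAt
    have hint : IntervalIntegrable (fun t => G γ h t (ψ₂ t)) volume 0 s := by
      refine ContinuousOn.intervalIntegrable ?_
      rw [uIcc_of_le hs.1]
      exact hGcont.mono hsub
    have := intervalIntegral.integral_eq_sub_of_hasDeriv_right_of_le hs.1 hcont hder hint
    rw [this]
    norm_num
  -- p equals P ψ₂ on Icc
  have hp_eq : ∀ s ∈ Icc (0:ℝ) d, p s = P γ h ψ₂ s := by
    intro s hs
    rcases eq_or_lt_of_le hs.1 with hs0 | hs0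
    · rw [← hs0, hp0]
      simp [P]
    · rw [P, II, hm_int s hs]
      have h3 : (s:ℝ)^3 ≠ 0 := pow_ne_zero _ hs0.ne'
      field_simp
  -- FTC : ψ₂ as primitive of p
  intro r hr
  have hsub : Icc (0:ℝ) r ⊆ Icc (0:ℝ) d := Icc_subset_Icc_right hr.2
  have hder2 : ∀ x ∈ Ioo (0:ℝ) r, HasDerivWithinAt ψ₂ (p x) (Ioi x) x := by
    intro x hx
    have hxIcc : x ∈ Icc (0:ℝ) d := ⟨hx.1.le, hx.2.le.trans hr.2⟩
    have hIccN : Icc (0:ℝ) d ∈ 𝓝 x :=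
      Filter.mem_of_superset (isOpen_Ioo.mem_nhds ⟨hx.1, hx.2.trans_le hr.2⟩)
        Ioo_subset_Icc_self
    exact (((hdiffψ x hxIcc).hasDerivAt hIccN)).hasDerivWithinAt
  have hpint : IntervalIntegrable p volume 0 r := by
    refine ContinuousOn.intervalIntegrable ?_
    rw [uIcc_of_le hr.1]
    exact hpc.mono hsub
  have hFTC2 := intervalIntegral.integral_eq_sub_of_hasDeriv_right_of_le hr.1
    (hψc.mono hsub) hder2 hpint
  have hint_congr : (∫ s in (0:ℝ)..r, P γ h ψ₂ s) = ∫ s in (0:ℝ)..r, p s := by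
    refine intervalIntegral.integral_congr fun s hs => ?_
    rw [uIcc_of_le hr.1] at hs
    exact (hp_eq s (hsub hs)).symm
  rw [T, hint_congr, hFTC2, h0]
  ring

end S16

open S16 in
theorem stmt_16 (γ F : ℝ → ℝ)
    (hγ : ContDiff ℝ 1 γ) (hγ' : ∃ C : ℝ, ∀ x : ℝ, |deriv γ x| ≤ C)
    (hF : ContDiff ℝ 2 F) (hF0 : F 0 = 0)
    (hFF' : ∃ C : ℝ, ∀ x : ℝ, |deriv (fun s => F s * deriv F s) x| ≤ C)
    (lam : ℝ) (d : ℝ) (hd : 0 < d) :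
    ∃ ψ : ℝ → ℝ,
      (ContDiffOn ℝ 1 ψ (Icc 0 d) ∧ ContDiffOn ℝ 2 ψ (Ioc 0 d) ∧
        ψ 0 = lam ∧ derivWithin ψ (Icc 0 d) 0 = 0 ∧
        ∀ r ∈ Ioc (0:ℝ) d,
          derivWithin (derivWithin ψ (Icc 0 d)) (Icc 0 d) r
              + (3 / r) * derivWithin ψ (Icc 0 d) r
            = -γ (r^2 * ψ r) - F (r^2 * ψ r) * deriv F (r^2 * ψ r) / r^2) ∧
      ∀ ψ₂ : ℝ → ℝ,
        (ContDiffOn ℝ 1 ψ₂ (Icc 0 d) ∧ ContDiffOn ℝ 2 ψ₂ (Ioc 0 d) ∧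
          ψ₂ 0 = lam ∧ derivWithin ψ₂ (Icc 0 d) 0 = 0 ∧
          ∀ r ∈ Ioc (0:ℝ) d,
            derivWithin (derivWithin ψ₂ (Icc 0 d)) (Icc 0 d) r
                + (3 / r) * derivWithin ψ₂ (Icc 0 d) r
              = -γ (r^2 * ψ₂ r) - F (r^2 * ψ₂ r) * deriv F (r^2 * ψ₂ r) / r^2) →
        EqOn ψ ψ₂ (Icc 0 d) := by
  obtain ⟨Cγr, hγ'⟩ := hγ'
  obtain ⟨Chr, hFF'⟩ := hFF'
  set h : ℝ → ℝ := fun s => F s * deriv F s with hh_def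
  have hγc : Continuous γ := hγ.continuous
  have hγdiff : Differentiable ℝ γ := hγ.differentiable one_ne_zero
  have hγl : LipschitzWith Cγr.toNNReal γ := by
    refine lipschitzWith_of_nnnorm_deriv_le hγdiff fun x => ?_
    rw [← NNReal.coe_le_coe, coe_nnnorm, Real.norm_eq_abs, Real.coe_toNNReal']
    exact (hγ' x).trans (le_max_left _ _)
  have hFd : Differentiable ℝ F := hF.differentiable two_ne_zero
  have hF2 : ContDiff ℝ (1+1) F := by rw [one_add_one_eq_two]; exact hF
  have hF1 : ContDiff ℝ 1 (deriv F) := (contDiff_succ_iff_deriv.1 hF2).2.2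
  have hhc : Continuous h := hFd.continuous.mul hF1.continuous
  have hhdiff : Differentiable ℝ h := hFd.mul (hF1.differentiable one_ne_zero)
  have hhl : LipschitzWith Chr.toNNReal h := by
    refine lipschitzWith_of_nnnorm_deriv_le hhdiff fun x => ?_
    rw [← NNReal.coe_le_coe, coe_nnnorm, Real.norm_eq_abs, Real.coe_toNNReal']
    exact (hFF' x).trans (le_max_left _ _)
  have hh0 : h 0 = 0 := by rw [hh_def]; simp [hF0]
  obtain ⟨n, hc⟩ := exists_contracting_iterate γ h lam hd hγc hγl hhc hhl hh0
  set TTm := TT γ h lam hd hγc hhc hhl hh0 with hTTm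
  set x₀ := ContractingWith.fixedPoint (TTm^[n]) hc with hx₀
  have hfix : Function.IsFixedPt TTm x₀ := hc.isFixedPt_fixedPoint_iterate
  set ψ := extf hd x₀ with hψdef
  have hψc : Continuous ψ := extf_cont hd x₀
  have hfixOn : ∀ r ∈ Icc (0:ℝ) d, T γ h lam ψ r = ψ r := by
    intro r hr
    calc T γ h lam ψ r = (TTm x₀) ⟨r, hr⟩ := rfl
      _ = x₀ ⟨r, hr⟩ := by rw [hfix]
      _ = ψ r := (extf_eq hd x₀ hr).symm
  obtain ⟨hC1, hC2, h0, hp0, hode⟩ := sol_props hd hγc hhc hhl hh0 hψc hfixOn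
  refine ⟨ψ, ⟨hC1, hC2, h0, hp0, fun r hr => hode r hr⟩, ?_⟩
  rintro ψ₂ ⟨hc1, hc2, h02, hp02, hode2⟩
  have hfix2 : ∀ r ∈ Icc (0:ℝ) d, T γ h lam ψ₂ r = ψ₂ r :=
    fixed_of_solution hd hγc hhc hc1 hc2 h02 hp02 (fun r hr => hode2 r hr)
  set f₂ : C(Icc (0:ℝ) d, ℝ) := ⟨(Icc (0:ℝ) d).restrict ψ₂, hc1.continuousOn.restrict⟩
    with hf₂
  have hfixf₂ : Function.IsFixedPt TTm f₂ := by
    refine ContinuousMap.ext fun x => ?_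
    show T γ h lam (extf hd f₂) (x:ℝ) = f₂ x
    have hEqOn : EqOn (extf hd f₂) ψ₂ (Icc 0 d) := fun t ht => by
      rw [extf_eq hd f₂ ht]; rfl
    rw [T_congr hEqOn x.2]
    exact hfix2 x x.2
  have heq : f₂ = x₀ := hc.fixedPoint_unique (hfixf₂.iterate n)
  intro r hr
  calc ψ r = x₀ ⟨r, hr⟩ := extf_eq hd x₀ hr
    _ = f₂ ⟨r, hr⟩ := by rw [heq]
    _ = ψ₂ r := rfl
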